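/- Let F : ℝ^p → ℝ be bounded below with locally Lipschitz gradient and let x_{k+1} = x_k − M_k ∇F(x_k) with M_k symmetric positive definite satisfying ∑ λ_min(M_k) = ∞ and ∑ λ_max(M_k)^q < ∞ for some q > 1. If all iterates remain in a set U ⊂ ℝ^p whose closure contains no stationary point of F, then the conclusion of the convergence theorem forces a contradiction; i.e., the iterates cannot remain forever in a bounded set containing no stationary points. -/

import Mathlib

open Filter RealInnerProductSpace

/-- Smallest eigenvalue of a Hermitian real matrix. -/
noncomputable def lamMin {p : ℕ} [NeZero p] {M : Matrix (Fin p) (Fin p) ℝ}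
    (hM : M.IsHermitian) : ℝ :=
  Finset.univ.inf' Finset.univ_nonempty hM.eigenvalues

/-- Largest eigenvalue of a Hermitian real matrix. -/
noncomputable def lamMax {p : ℕ} [NeZero p] {M : Matrix (Fin p) (Fin p) ℝ}
    (hM : M.IsHermitian) : ℝ :=
  Finset.univ.sup' Finset.univ_nonempty hM.eigenvalues

lemma repr_toEuclideanLin {p : ℕ} [NeZero p] {M : Matrix (Fin p) (Fin p) ℝ} (hM : M.PosDef)
    (v : EuclideanSpace ℝ (Fin p)) (i : Fin p) :
    (hM.1.eigenvectorBasis.repr (M.toEuclideanLin v)) i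
      = hM.1.eigenvalues i * hM.1.eigenvectorBasis.repr v i := by
  classical
  set B := hM.1.eigenvectorBasis with hB
  have hT : ∀ j, M.toEuclideanLin (B j) = hM.1.eigenvalues j • B j := by
    intro j
    apply_fun (WithLp.equiv 2 (Fin p → ℝ))
    simpa [Matrix.toEuclideanLin_apply] using hM.1.mulVec_eigenvectorBasis j
  conv_lhs => rw [← B.sum_repr v]
  rw [map_sum, map_sum]
  simp_rw [map_smul, hT, map_smul, B.repr_self]
  show (∑ j, B.repr v j • (hM.1.eigenvalues j • EuclideanSpace.single j (1:ℝ))) i = _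
  rw [WithLp.ofLp_sum, Finset.sum_apply]
  simp only [PiLp.smul_apply, EuclideanSpace.single_apply, smul_eq_mul, mul_ite, mul_one, mul_zero]
  rw [Finset.sum_ite_eq Finset.univ i (fun j => B.repr v j * hM.1.eigenvalues j)]
  simp [mul_comm]

lemma inner_toEuclideanLin_eq {p : ℕ} [NeZero p] {M : Matrix (Fin p) (Fin p) ℝ} (hM : M.PosDef)
    (v : EuclideanSpace ℝ (Fin p)) :
    ⟪v, M.toEuclideanLin v⟫ = ∑ i, hM.1.eigenvalues i * (hM.1.eigenvectorBasis.repr v i)^2 := by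
  rw [← hM.1.eigenvectorBasis.repr.inner_map_map v (M.toEuclideanLin v), PiLp.inner_apply]
  simp [repr_toEuclideanLin hM v]
  exact Finset.sum_congr rfl fun i _ => by ring

lemma normsq_toEuclideanLin_eq {p : ℕ} [NeZero p] {M : Matrix (Fin p) (Fin p) ℝ} (hM : M.PosDef)
    (v : EuclideanSpace ℝ (Fin p)) :
    ‖M.toEuclideanLin v‖^2 = ∑ i, (hM.1.eigenvalues i)^2 * (hM.1.eigenvectorBasis.repr v i)^2 := by
  rw [← real_inner_self_eq_norm_sq, ← hM.1.eigenvectorBasis.repr.inner_map_map, PiLp.inner_apply]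
  simp [repr_toEuclideanLin hM v]
  refine Finset.sum_congr rfl fun i _ => ?_
  rw [← abs_mul, sq_abs]
  ring

lemma normsq_eq_basis {p : ℕ} [NeZero p] {M : Matrix (Fin p) (Fin p) ℝ} (hM : M.PosDef)
    (v : EuclideanSpace ℝ (Fin p)) :
    ‖v‖^2 = ∑ i, (hM.1.eigenvectorBasis.repr v i)^2 := by
  rw [← real_inner_self_eq_norm_sq, ← hM.1.eigenvectorBasis.repr.inner_map_map, PiLp.inner_apply]
  simp [sq]

lemma lamMin_le_inner {p : ℕ} [NeZero p] {M : Matrix (Fin p) (Fin p) ℝ} (hM : M.PosDef)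
    (v : EuclideanSpace ℝ (Fin p)) :
    lamMin hM.1 * ‖v‖^2 ≤ ⟪v, M.toEuclideanLin v⟫ := by
  rw [inner_toEuclideanLin_eq hM v, normsq_eq_basis hM v, Finset.mul_sum]
  refine Finset.sum_le_sum fun i _ => ?_
  exact mul_le_mul_of_nonneg_right (Finset.inf'_le _ (Finset.mem_univ i)) (sq_nonneg _)

lemma normsq_le_lamMax_mul_inner {p : ℕ} [NeZero p] {M : Matrix (Fin p) (Fin p) ℝ} (hM : M.PosDef)
    (v : EuclideanSpace ℝ (Fin p)) :
    ‖M.toEuclideanLin v‖^2 ≤ lamMax hM.1 * ⟪v, M.toEuclideanLin v⟫ := by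
  rw [inner_toEuclideanLin_eq hM v, normsq_toEuclideanLin_eq hM v, Finset.mul_sum]
  refine Finset.sum_le_sum fun i _ => ?_
  have h1 : hM.1.eigenvalues i ≤ lamMax hM.1 := Finset.le_sup' _ (Finset.mem_univ i)
  have h2 : 0 < hM.1.eigenvalues i := hM.eigenvalues_pos i
  calc (hM.1.eigenvalues i)^2 * (hM.1.eigenvectorBasis.repr v i)^2
      = hM.1.eigenvalues i * (hM.1.eigenvalues i * (hM.1.eigenvectorBasis.repr v i)^2) := by ring
    _ ≤ lamMax hM.1 * (hM.1.eigenvalues i * (hM.1.eigenvectorBasis.repr v i)^2) :=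
      mul_le_mul_of_nonneg_right h1 (mul_nonneg h2.le (sq_nonneg _))

lemma lamMin_pos {p : ℕ} [NeZero p] {M : Matrix (Fin p) (Fin p) ℝ} (hM : M.PosDef) :
    0 < lamMin hM.1 := by
  rw [lamMin]
  exact (Finset.lt_inf'_iff _).2 fun i _ => hM.eigenvalues_pos i

lemma lamMax_pos {p : ℕ} [NeZero p] {M : Matrix (Fin p) (Fin p) ℝ} (hM : M.PosDef) :
    0 < lamMax hM.1 := by
  obtain ⟨i, _⟩ := Finset.univ_nonempty (α := Fin p)
  calc (0:ℝ) < lamMin hM.1 := lamMin_pos hM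
    _ ≤ hM.1.eigenvalues i := Finset.inf'_le _ (by simp)
    _ ≤ lamMax hM.1 := Finset.le_sup' _ (by simp)

lemma descent_step {p : ℕ} (F : EuclideanSpace ℝ (Fin p) → ℝ)
    (hdiff : Differentiable ℝ F) (K : Set (EuclideanSpace ℝ (Fin p)))
    (hK : Convex ℝ K) (L : ℝ) (hL : 0 ≤ L)
    (hlip : ∀ z ∈ K, ∀ w ∈ K, ‖gradient F z - gradient F w‖ ≤ L * ‖z - w‖)
    (a b : EuclideanSpace ℝ (Fin p)) (ha : a ∈ K) (hb : b ∈ K) :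
    F b ≤ F a + ⟪gradient F a, b - a⟫ + L * ‖b - a‖^2 := by
  set g0 := gradient F a with hg0
  set G : EuclideanSpace ℝ (Fin p) → ℝ := fun z => F z - ⟪g0, z⟫ with hG
  set s : Set (EuclideanSpace ℝ (Fin p)) := segment ℝ a b with hs
  have hsK : s ⊆ K := hK.segment_subset ha hb
  have hsball : s ⊆ Metric.closedBall a ‖b - a‖ := by
    apply (convex_closedBall a ‖b - a‖).segment_subset
    · simp
    · simp [Metric.mem_closedBall, dist_eq_norm]
  have hder : ∀ z ∈ s, HasFDerivWithinAt G
      ((InnerProductSpace.toDual ℝ (EuclideanSpace ℝ (Fin p))) (gradient F z) - (InnerProductSpace.toDual ℝ (EuclideanSpace ℝ (Fin p))) g0) s z := by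
    intro z _
    have h1 : HasFDerivAt F ((InnerProductSpace.toDual ℝ (EuclideanSpace ℝ (Fin p))) (gradient F z)) z :=
      hasGradientAt_iff_hasFDerivAt.mp (hdiff z).hasGradientAt
    have h2 : HasFDerivAt (fun w : EuclideanSpace ℝ (Fin p) => ⟪g0, w⟫) ((InnerProductSpace.toDual ℝ (EuclideanSpace ℝ (Fin p))) g0) z := by
      exact ((InnerProductSpace.toDual ℝ (EuclideanSpace ℝ (Fin p))) g0).hasFDerivAt (x := z)
    exact (h1.sub h2).hasFDerivWithinAt
  have hbound : ∀ z ∈ s, ‖(InnerProductSpace.toDual ℝ (EuclideanSpace ℝ (Fin p))) (gradient F z)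
      - (InnerProductSpace.toDual ℝ (EuclideanSpace ℝ (Fin p))) g0‖ ≤ L * ‖b - a‖ := by
    intro z hz
    rw [← map_sub, (InnerProductSpace.toDual ℝ (EuclideanSpace ℝ (Fin p))).norm_map]
    calc ‖gradient F z - g0‖ ≤ L * ‖z - a‖ := hlip z (hsK hz) a ha
      _ ≤ L * ‖b - a‖ := by
          apply mul_le_mul_of_nonneg_left _ hL
          have := hsball hz
          rwa [Metric.mem_closedBall, dist_eq_norm] at this
  have key : ‖G b - G a‖ ≤ L * ‖b - a‖ * ‖b - a‖ :=
    Convex.norm_image_sub_le_of_norm_hasFDerivWithin_le hder hbound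
      (convex_segment a b) (left_mem_segment ℝ a b) (right_mem_segment ℝ a b)
  have h1 : G b - G a ≤ L * ‖b - a‖ * ‖b - a‖ := (le_abs_self _).trans key
  have h2 : G b - G a = F b - F a - ⟪g0, b - a⟫ := by
    simp only [hG, inner_sub_right]; ring
  rw [sq]
  linarith

/-- Gradient descent with summable diminishing step sizes cannot remain forever in a
bounded set whose closure contains no stationary point of `F`. -/
theorem no_iterates_in_bounded_set_without_stationary_points {p : ℕ} [NeZero p]
    (F : EuclideanSpace ℝ (Fin p) → ℝ) (F_lb : ℝ)
    (hbd : ∀ x, F_lb ≤ F x)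
    (hdiff : Differentiable ℝ F)
    (hlip : ∀ K : Set (EuclideanSpace ℝ (Fin p)), IsCompact K →
      ∃ L : ℝ, 0 ≤ L ∧ ∀ x ∈ K, ∀ y ∈ K, ‖gradient F x - gradient F y‖ ≤ L * ‖x - y‖)
    (M : ℕ → Matrix (Fin p) (Fin p) ℝ)
    (hM : ∀ k, (M k).PosDef)
    (hdiv : Tendsto (fun n => ∑ k ∈ Finset.range n, lamMin (hM k).1) atTop atTop)
    (hsum : ∃ q : ℝ, 1 < q ∧ Summable (fun k => lamMax (hM k).1 ^ q))
    (x : ℕ → EuclideanSpace ℝ (Fin p))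
    (hx : ∀ k, x (k + 1) = x k - (M k).toEuclideanLin (gradient F (x k)))
    (U : Set (EuclideanSpace ℝ (Fin p)))
    (hU : Bornology.IsBounded U)
    (hno : ∀ z ∈ closure U, gradient F z ≠ 0)
    (hin : ∀ k, x k ∈ U) :
    False := by
  classical
  -- the compact convex set containing all segments
  set K : Set (EuclideanSpace ℝ (Fin p)) := closure (convexHull ℝ U) with hKdef
  have hKcomp : IsCompact K := (isBounded_convexHull.mpr hU).isCompact_closure
  have hKconv : Convex ℝ K := (convex_convexHull ℝ U).closure
  have hUK : U ⊆ K := (subset_convexHull ℝ U).trans subset_closure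
  obtain ⟨L, hL0, hLlip⟩ := hlip K hKcomp
  -- continuity of the gradient on `closure U` and the positive lower bound ε
  have hCcomp : IsCompact (closure U) := hU.isCompact_closure
  have hCne : (closure U).Nonempty := ⟨x 0, subset_closure (hin 0)⟩
  obtain ⟨L', hL'0, hL'lip⟩ := hlip (closure U) hCcomp
  have hgradcont : ContinuousOn (gradient F) (closure U) := by
    refine (LipschitzOnWith.of_dist_le' (K := L') ?_).continuousOn
    intro a ha b hb
    simpa [dist_eq_norm] using hL'lip a ha b hb
  have hnormcont : ContinuousOn (fun z => ‖gradient F z‖) (closure U) :=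
    hgradcont.norm
  obtain ⟨z0, hz0mem, hz0min'⟩ := hCcomp.exists_isMinOn hCne hnormcont
  have hz0min : ∀ z ∈ closure U, ‖gradient F z0‖ ≤ ‖gradient F z‖ :=
    fun z hz => hz0min' hz
  set ε : ℝ := ‖gradient F z0‖ with hεdef
  have hεpos : 0 < ε := norm_pos_iff.mpr (hno z0 hz0mem)
  have hεle : ∀ k, ε ≤ ‖gradient F (x k)‖ :=
    fun k => hz0min _ (subset_closure (hin k))
  -- eventually λmax k is small
  obtain ⟨q, hq1, hqsum⟩ := hsum
  set δ : ℝ := 1 / (2 * (L + 1)) with hδdef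
  have hδpos : 0 < δ := by positivity
  have hsmall : ∀ᶠ k in atTop, lamMax (hM k).1 < δ := by
    have h0 := hqsum.tendsto_atTop_zero
    have hδq : 0 < δ ^ q := Real.rpow_pos_of_pos hδpos q
    filter_upwards [h0.eventually (gt_mem_nhds hδq)] with k hk
    by_contra hcon
    push_neg at hcon
    exact absurd (Real.rpow_le_rpow hδpos.le hcon (by linarith)) (not_le.mpr hk)
  obtain ⟨N, hN⟩ := eventually_atTop.mp hsmall
  -- the one-step decrease for k ≥ N
  have hstep : ∀ k, N ≤ k →
      F (x (k + 1)) ≤ F (x k) - ε^2 / 2 * lamMin (hM k).1 := by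
    intro k hk
    set g : EuclideanSpace ℝ (Fin p) := gradient F (x k) with hg
    set T : EuclideanSpace ℝ (Fin p) := (M k).toEuclideanLin g with hT
    have hdesc := descent_step F hdiff K hKconv L hL0 hLlip (x k) (x (k + 1))
      (hUK (hin k)) (hUK (hin (k + 1)))
    have hdiffx : x (k + 1) - x k = -T := by rw [hx k]; abel
    have hinner : ⟪g, x (k + 1) - x k⟫ = -⟪g, T⟫ := by
      rw [hdiffx, inner_neg_right]
    have hnorm : ‖x (k + 1) - x k‖^2 ≤ lamMax (hM k).1 * ⟪g, T⟫ := by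
      rw [hdiffx, norm_neg]
      exact normsq_le_lamMax_mul_inner (hM k) g
    have hinn_lb : lamMin (hM k).1 * ‖g‖^2 ≤ ⟪g, T⟫ := lamMin_le_inner (hM k) g
    have hlmin : 0 < lamMin (hM k).1 := lamMin_pos (hM k)
    have hgε : ε^2 ≤ ‖g‖^2 := by
      have := hεle k
      nlinarith [hεpos]
    have hinn_nonneg : 0 ≤ ⟪g, T⟫ := le_trans (by positivity) hinn_lb
    have hsmallk : lamMax (hM k).1 < δ := hN k hk
    have hLδ : L * lamMax (hM k).1 ≤ 1 / 2 := by
      have hlmaxpos : 0 < lamMax (hM k).1 := lamMax_pos (hM k)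
      have : L * lamMax (hM k).1 ≤ L * δ := by nlinarith
      have hLδ2 : L * δ ≤ 1 / 2 := by
        rw [hδdef, mul_one_div, div_le_iff₀ (by positivity : (0:ℝ) < 2 * (L + 1))]
        linarith
      linarith
    have hquad : L * ‖x (k + 1) - x k‖^2 ≤ 1 / 2 * ⟪g, T⟫ := by
      calc L * ‖x (k + 1) - x k‖^2 ≤ L * (lamMax (hM k).1 * ⟪g, T⟫) :=
            mul_le_mul_of_nonneg_left hnorm hL0
        _ = (L * lamMax (hM k).1) * ⟪g, T⟫ := by ring
        _ ≤ 1 / 2 * ⟪g, T⟫ := mul_le_mul_of_nonneg_right hLδ hinn_nonneg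
    have hmin2 : ε^2 / 2 * lamMin (hM k).1 ≤ 1 / 2 * ⟪g, T⟫ := by
      have : lamMin (hM k).1 * ε^2 ≤ lamMin (hM k).1 * ‖g‖^2 :=
        mul_le_mul_of_nonneg_left hgε hlmin.le
      nlinarith
    rw [hinner] at hdesc
    linarith
  -- telescoping
  set S : ℕ → ℝ := fun n => ∑ k ∈ Finset.range n, lamMin (hM k).1 with hS
  have htel : ∀ n, N ≤ n → F (x n) + ε^2 / 2 * (S n - S N) ≤ F (x N) := by
    intro n hn
    induction n, hn using Nat.le_induction with
    | base => simp
    | succ n hn ih =>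
      have h1 := hstep n hn
      have h2 : S (n + 1) = S n + lamMin (hM n).1 := Finset.sum_range_succ _ n
      have h3 : ε^2 / 2 * (S (n + 1) - S N)
          = ε^2 / 2 * (S n - S N) + ε^2 / 2 * lamMin (hM n).1 := by rw [h2]; ring
      linarith
  obtain ⟨n, hbig, hnN⟩ :=
    ((hdiv.eventually_gt_atTop (S N + (F (x N) - F_lb + 1) * (2 / ε^2))).and
      (eventually_ge_atTop N)).exists
  have h1 := htel n hnN
  have h2 := hbd (x n)
  have hε2 : 0 < ε^2 := by positivity
  have h3 : ε^2 / 2 * (S n - S N) > F (x N) - F_lb + 1 := by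
    have : S n - S N > (F (x N) - F_lb + 1) * (2 / ε^2) := by
      simp only [hS] at hbig ⊢
      linarith
    calc ε^2 / 2 * (S n - S N) > ε^2 / 2 * ((F (x N) - F_lb + 1) * (2 / ε^2)) := by
          apply mul_lt_mul_of_pos_left this (by positivity)
      _ = F (x N) - F_lb + 1 := by field_simp
  linarith
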